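/- Let μ, ν be probability measures on ℝ with finite first moments and CDFs F_μ, F_ν. Then the 1-Wasserstein distance satisfies W₁(μ, ν) = ∫_ℝ |F_μ(x) − F_ν(x)| dx. -/

import Mathlib

open MeasureTheory Filter Topology ENNReal

/-- The 1-Wasserstein distance between two Borel measures on `ℝ`, as the infimum of the
transport cost `∫ |x - y| dπ` over all probability couplings `π` of `μ` and `ν`
(with value in `ℝ≥0∞`). -/
noncomputable def W1 (μ ν : Measure ℝ) : ℝ≥0∞ :=
  sInf {r : ℝ≥0∞ | ∃ π : Measure (ℝ × ℝ), IsProbabilityMeasure π ∧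
    π.map Prod.fst = μ ∧ π.map Prod.snd = ν ∧ r = ∫⁻ p, edist p.1 p.2 ∂π}

section Aux

open ProbabilityTheory Set

variable (μ : Measure ℝ) [IsProbabilityMeasure μ]

noncomputable def qf (μ : Measure ℝ) (u : ℝ) : ℝ := sInf {x | u ≤ cdf μ x}

lemma qf_bddBelow {u : ℝ} (hu : 0 < u) : BddBelow {x | u ≤ cdf μ x} := by
  obtain ⟨z, hz⟩ : ∃ z, ∀ w ≤ z, cdf μ w < u := by
    have h := (tendsto_cdf_atBot μ).eventually (eventually_lt_nhds hu)
    obtain ⟨z, hz⟩ := eventually_atBot.1 h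
    exact ⟨z, hz⟩
  exact ⟨z, fun y hy => le_of_not_gt fun h => absurd hy (not_le.2 (hz y h.le))⟩

lemma qf_nonempty {u : ℝ} (hu : u < 1) : {x | u ≤ cdf μ x}.Nonempty := by
  have := (tendsto_cdf_atTop μ).eventually (eventually_gt_nhds hu)
  obtain ⟨x, hx⟩ := this.exists
  exact ⟨x, hx.le⟩

lemma le_cdf_qf {u : ℝ} (hu0 : 0 < u) (hu1 : u < 1) : u ≤ cdf μ (qf μ u) := by
  have hne := qf_nonempty μ hu1
  have hbd := qf_bddBelow μ hu0
  have key : ∀ ε > (0:ℝ), u ≤ cdf μ (qf μ u + ε) := by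
    intro ε hε
    obtain ⟨s, hs, hlt⟩ := Real.lt_sInf_add_pos hne hε
    exact hs.trans (monotone_cdf μ hlt.le)
  have htends : Tendsto (fun ε : ℝ => cdf μ (qf μ u + ε)) (𝓝[>] 0) (𝓝 (cdf μ (qf μ u))) := by
    have h1 : Tendsto (fun ε : ℝ => qf μ u + ε) (𝓝[>] 0) (𝓝[≥] (qf μ u)) := by
      rw [tendsto_nhdsWithin_iff]
      constructor
      · simpa using (continuous_add_left (qf μ u)).tendsto' 0 (qf μ u) (by simp) |>.mono_left nhdsWithin_le_nhds
      · filter_upwards [self_mem_nhdsWithin] with ε (hε : 0 < ε)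
        simp [le_of_lt hε]
    exact ((cdf μ).right_continuous (qf μ u)).tendsto.comp h1
  exact ge_of_tendsto htends (by filter_upwards [self_mem_nhdsWithin] with ε hε using key ε hε)

lemma qf_le_iff {u x : ℝ} (hu0 : 0 < u) (hu1 : u < 1) : qf μ u ≤ x ↔ u ≤ cdf μ x := by
  constructor
  · intro h
    exact (le_cdf_qf μ hu0 hu1).trans (monotone_cdf μ h)
  · intro h
    exact csInf_le (qf_bddBelow μ hu0) h

lemma monotoneOn_qf : MonotoneOn (qf μ) (Ioo 0 1) := by
  intro u hu v hv huv
  exact csInf_le_csInf (qf_bddBelow μ hu.1) (qf_nonempty μ hv.2)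
    (fun x hx => le_trans huv hx)

lemma aemeasurable_qf : AEMeasurable (qf μ) (volume.restrict (Ioo 0 1)) :=
  aemeasurable_restrict_of_monotoneOn measurableSet_Ioo (monotoneOn_qf μ)

lemma volume_Iic_inter {c : ℝ} (hc0 : 0 ≤ c) (hc1 : c ≤ 1) :
    volume (Iic c ∩ Ioo 0 1) = ENNReal.ofReal c := by
  rcases lt_or_eq_of_le hc1 with h | h
  · have : Iic c ∩ Ioo 0 1 = Ioc 0 c := by
      ext u; simp only [mem_inter_iff, mem_Iic, mem_Ioo, mem_Ioc]
      constructor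
      · rintro ⟨h1, h2, h3⟩; exact ⟨h2, h1⟩
      · rintro ⟨h1, h2⟩; exact ⟨h2, h1, lt_of_le_of_lt h2 h⟩
    rw [this, Real.volume_Ioc, sub_zero]
  · have : Iic c ∩ Ioo 0 1 = Ioo 0 1 := by
      apply inter_eq_self_of_subset_right
      intro u hu; exact le_of_lt (h ▸ hu.2)
    rw [this, Real.volume_Ioo, ← h, sub_zero]

lemma map_qf : (volume.restrict (Ioo 0 1)).map (qf μ) = μ := by
  have hprob : IsProbabilityMeasure (volume.restrict (Ioo 0 1) : Measure ℝ) :=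
    ⟨by simp [Real.volume_Ioo]⟩
  refine Measure.ext_of_Iic _ _ (fun t => ?_)
  rw [Measure.map_apply_of_aemeasurable (aemeasurable_qf μ) measurableSet_Iic,
    Measure.restrict_apply' measurableSet_Ioo]
  have hset : qf μ ⁻¹' Iic t ∩ Ioo 0 1 = Iic (cdf μ t) ∩ Ioo 0 1 := by
    ext u; simp only [mem_inter_iff, mem_preimage, mem_Iic, mem_Ioo]
    constructor
    · rintro ⟨h1, h2⟩
      exact ⟨(qf_le_iff μ h2.1 h2.2).1 h1, h2⟩
    · rintro ⟨h1, h2⟩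
      exact ⟨(qf_le_iff μ h2.1 h2.2).2 h1, h2⟩
  rw [hset, volume_Iic_inter (cdf_nonneg μ t) (cdf_le_one μ t), ofReal_cdf]

lemma indicator_cost (p : ℝ × ℝ) :
    ∫⁻ t, ((Ico p.1 p.2).indicator 1 t + (Ico p.2 p.1).indicator 1 t) = edist p.1 p.2 := by
  rw [lintegral_add_left (measurable_one.indicator measurableSet_Ico),
    lintegral_indicator_one measurableSet_Ico, lintegral_indicator_one measurableSet_Ico,
    Real.volume_Ico, Real.volume_Ico, edist_dist, Real.dist_eq]
  rcases le_total p.1 p.2 with h | h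
  · rw [abs_of_nonpos (show p.1 - p.2 ≤ 0 by linarith),
      ENNReal.ofReal_of_nonpos (show p.1 - p.2 ≤ 0 by linarith), add_zero, neg_sub]
  · rw [abs_of_nonneg (show (0:ℝ) ≤ p.1 - p.2 by linarith),
      ENNReal.ofReal_of_nonpos (show p.2 - p.1 ≤ 0 by linarith), zero_add]

lemma cost_eq (π : Measure (ℝ × ℝ)) [IsProbabilityMeasure π] :
    ∫⁻ p, edist p.1 p.2 ∂π =
      ∫⁻ t, (π {p : ℝ × ℝ | p.1 ≤ t ∧ t < p.2} + π {p : ℝ × ℝ | p.2 ≤ t ∧ t < p.1}) := by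
  set S1 : Set ((ℝ × ℝ) × ℝ) := {z | z.1.1 ≤ z.2 ∧ z.2 < z.1.2} with hS1def
  set S2 : Set ((ℝ × ℝ) × ℝ) := {z | z.1.2 ≤ z.2 ∧ z.2 < z.1.1} with hS2def
  have hS1 : MeasurableSet S1 :=
    (measurableSet_le measurable_fst.fst measurable_snd).inter
      (measurableSet_lt measurable_snd measurable_fst.snd)
  have hS2 : MeasurableSet S2 :=
    (measurableSet_le measurable_fst.snd measurable_snd).inter
      (measurableSet_lt measurable_snd measurable_fst.fst)
  have key : ∫⁻ p, ∫⁻ t, (S1.indicator 1 (p, t) + S2.indicator 1 (p, t)) ∂volume ∂π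
      = ∫⁻ t, ∫⁻ p, (S1.indicator 1 (p, t) + S2.indicator 1 (p, t)) ∂π := by
    apply lintegral_lintegral_swap
    exact ((measurable_const.indicator hS1).add (measurable_const.indicator hS2)).aemeasurable
  calc ∫⁻ p, edist p.1 p.2 ∂π
      = ∫⁻ p, ∫⁻ t, (S1.indicator 1 (p, t) + S2.indicator 1 (p, t)) ∂volume ∂π := by
        refine lintegral_congr fun p => ?_
        rw [← indicator_cost p]
        refine lintegral_congr fun t => ?_
        congr 1 <;> simp [Set.indicator_apply, hS1def, hS2def, mem_Ico]
    _ = ∫⁻ t, ∫⁻ p, (S1.indicator 1 (p, t) + S2.indicator 1 (p, t)) ∂π := key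
    _ = ∫⁻ t, (π {p : ℝ × ℝ | p.1 ≤ t ∧ t < p.2} + π {p : ℝ × ℝ | p.2 ≤ t ∧ t < p.1}) := by
        refine lintegral_congr fun t => ?_
        have e1 : (fun p : ℝ × ℝ => S1.indicator 1 (p, t)) =
            ({p : ℝ × ℝ | p.1 ≤ t ∧ t < p.2}).indicator (1 : (ℝ × ℝ) → ℝ≥0∞) := by
          funext p; simp [Set.indicator_apply, hS1def]
        have e2 : (fun p : ℝ × ℝ => S2.indicator 1 (p, t)) =
            ({p : ℝ × ℝ | p.2 ≤ t ∧ t < p.1}).indicator (1 : (ℝ × ℝ) → ℝ≥0∞) := by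
          funext p; simp [Set.indicator_apply, hS2def]
        have hm1 : MeasurableSet {p : ℝ × ℝ | p.1 ≤ t ∧ t < p.2} :=
          (measurableSet_le measurable_fst measurable_const).inter
            (measurableSet_lt measurable_const measurable_snd)
        have hm2 : MeasurableSet {p : ℝ × ℝ | p.2 ≤ t ∧ t < p.1} :=
          (measurableSet_le measurable_snd measurable_const).inter
            (measurableSet_lt measurable_const measurable_fst)
        have : ∫⁻ p, (S1.indicator 1 (p, t) + S2.indicator 1 (p, t)) ∂π
            = ∫⁻ p, (({p : ℝ × ℝ | p.1 ≤ t ∧ t < p.2}).indicator (1 : (ℝ × ℝ) → ℝ≥0∞) p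
              + ({p : ℝ × ℝ | p.2 ≤ t ∧ t < p.1}).indicator (1 : (ℝ × ℝ) → ℝ≥0∞) p) ∂π := by
          refine lintegral_congr fun p => ?_
          congr 1
        rw [this, lintegral_add_left (measurable_one.indicator hm1),
          lintegral_indicator_one hm1, lintegral_indicator_one hm2]

lemma coupling_lower (π : Measure (ℝ × ℝ)) [IsProbabilityMeasure π]
    (ν : Measure ℝ) [IsProbabilityMeasure ν]
    (h1 : π.map Prod.fst = μ) (h2 : π.map Prod.snd = ν) (t : ℝ) :
    ENNReal.ofReal |(μ (Iic t)).toReal - (ν (Iic t)).toReal| ≤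
      π {p : ℝ × ℝ | p.1 ≤ t ∧ t < p.2} + π {p : ℝ × ℝ | p.2 ≤ t ∧ t < p.1} := by
  set A := {p : ℝ × ℝ | p.1 ≤ t ∧ t < p.2} with hA
  set B := {p : ℝ × ℝ | p.2 ≤ t ∧ t < p.1} with hB
  set C := {p : ℝ × ℝ | p.1 ≤ t ∧ p.2 ≤ t} with hC
  have hmA : MeasurableSet A := (measurableSet_le measurable_fst measurable_const).inter
    (measurableSet_lt measurable_const measurable_snd)
  have hmB : MeasurableSet B := (measurableSet_le measurable_snd measurable_const).inter
    (measurableSet_lt measurable_const measurable_fst)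
  have hmC : MeasurableSet C := (measurableSet_le measurable_fst measurable_const).inter
    (measurableSet_le measurable_snd measurable_const)
  have hμeq : μ (Iic t) = π A + π C := by
    rw [← h1, Measure.map_apply measurable_fst measurableSet_Iic]
    have : Prod.fst ⁻¹' Iic t = A ∪ C := by
      ext p
      simp only [mem_preimage, mem_Iic, mem_union, hA, hB, hC, mem_setOf_eq]
      constructor
      · intro h
        rcases le_or_gt p.2 t with h' | h'
        · exact Or.inr ⟨h, h'⟩
        · exact Or.inl ⟨h, h'⟩
      · rintro (⟨h, _⟩ | ⟨h, _⟩) <;> exact h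
    rw [this, measure_union _ hmC]
    · exact Set.disjoint_left.2 fun p hp hp' => absurd hp'.2 (not_le.2 hp.2)
  have hνeq : ν (Iic t) = π B + π C := by
    rw [← h2, Measure.map_apply measurable_snd measurableSet_Iic]
    have : Prod.snd ⁻¹' Iic t = B ∪ C := by
      ext p
      simp only [mem_preimage, mem_Iic, mem_union, hA, hB, hC, mem_setOf_eq]
      constructor
      · intro h
        rcases le_or_gt p.1 t with h' | h'
        · exact Or.inr ⟨h', h⟩
        · exact Or.inl ⟨h, h'⟩
      · rintro (⟨h, _⟩ | ⟨_, h⟩) <;> exact h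
    rw [this, measure_union _ hmC]
    · exact Set.disjoint_left.2 fun p hp hp' => absurd hp'.1 (not_le.2 hp.2)
  have hAfin : π A ≠ ∞ := measure_ne_top π A
  have hBfin : π B ≠ ∞ := measure_ne_top π B
  have hCfin : π C ≠ ∞ := measure_ne_top π C
  rw [hμeq, hνeq, ENNReal.toReal_add hAfin hCfin, ENNReal.toReal_add hBfin hCfin]
  have habs : |(π A).toReal + (π C).toReal - ((π B).toReal + (π C).toReal)|
      ≤ (π A).toReal + (π B).toReal := by
    rw [show (π A).toReal + (π C).toReal - ((π B).toReal + (π C).toReal)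
      = (π A).toReal - (π B).toReal by ring]
    refine (abs_sub _ _).trans ?_
    rw [abs_of_nonneg ENNReal.toReal_nonneg, abs_of_nonneg ENNReal.toReal_nonneg]
  calc ENNReal.ofReal _ ≤ ENNReal.ofReal ((π A).toReal + (π B).toReal) :=
        ENNReal.ofReal_le_ofReal habs
    _ ≤ π A + π B := by
        rw [ENNReal.ofReal_add ENNReal.toReal_nonneg ENNReal.toReal_nonneg,
          ENNReal.ofReal_toReal hAfin, ENNReal.ofReal_toReal hBfin]

lemma volume_Ioc_inter {a b : ℝ} (hb : 0 ≤ b) (ha : a ≤ 1) :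
    volume (Ioc b a ∩ Ioo 0 1) = ENNReal.ofReal (a - b) := by
  rcases lt_or_eq_of_le ha with h | h
  · have : Ioc b a ∩ Ioo 0 1 = Ioc b a := inter_eq_self_of_subset_left
      fun u hu => ⟨lt_of_le_of_lt hb hu.1, lt_of_le_of_lt hu.2 h⟩
    rw [this, Real.volume_Ioc]
  · subst h
    have : Ioc b 1 ∩ Ioo 0 1 = Ioo b 1 := by
      ext u
      simp only [mem_inter_iff, mem_Ioc, mem_Ioo]
      constructor
      · rintro ⟨⟨h1, _⟩, ⟨_, h4⟩⟩; exact ⟨h1, h4⟩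
      · rintro ⟨h1, h2⟩; exact ⟨⟨h1, h2.le⟩, ⟨lt_of_le_of_lt hb h1, h2⟩⟩
    rw [this, Real.volume_Ioo]

variable (ν : Measure ℝ) [IsProbabilityMeasure ν]

noncomputable def qcoupling : Measure (ℝ × ℝ) :=
  (volume.restrict (Ioo 0 1)).map (fun u => (qf μ u, qf ν u))

lemma aemeasurable_qpair : AEMeasurable (fun u => (qf μ u, qf ν u))
    (volume.restrict (Ioo 0 1)) :=
  (aemeasurable_qf μ).prodMk (aemeasurable_qf ν)

instance : IsProbabilityMeasure (volume.restrict (Ioo 0 1) : Measure ℝ) :=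
  ⟨by simp [Real.volume_Ioo]⟩

instance : IsProbabilityMeasure (qcoupling μ ν) :=
  Measure.isProbabilityMeasure_map (aemeasurable_qpair μ ν)

lemma qcoupling_fst : (qcoupling μ ν).map Prod.fst = μ := by
  rw [qcoupling, AEMeasurable.map_map_of_aemeasurable
    measurable_fst.aemeasurable (aemeasurable_qpair μ ν)]
  exact map_qf μ

lemma qcoupling_snd : (qcoupling μ ν).map Prod.snd = ν := by
  rw [qcoupling, AEMeasurable.map_map_of_aemeasurable
    measurable_snd.aemeasurable (aemeasurable_qpair μ ν)]
  exact map_qf ν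

lemma qcoupling_apply (t : ℝ) :
    qcoupling μ ν {p : ℝ × ℝ | p.1 ≤ t ∧ t < p.2} = ENNReal.ofReal (cdf μ t - cdf ν t) := by
  have hmA : MeasurableSet {p : ℝ × ℝ | p.1 ≤ t ∧ t < p.2} :=
    (measurableSet_le measurable_fst measurable_const).inter
      (measurableSet_lt measurable_const measurable_snd)
  rw [qcoupling, Measure.map_apply_of_aemeasurable (aemeasurable_qpair μ ν) hmA,
    Measure.restrict_apply' measurableSet_Ioo]
  have hset : (fun u => (qf μ u, qf ν u)) ⁻¹' {p : ℝ × ℝ | p.1 ≤ t ∧ t < p.2} ∩ Ioo 0 1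
      = Ioc (cdf ν t) (cdf μ t) ∩ Ioo 0 1 := by
    ext u
    simp only [mem_inter_iff, mem_preimage, mem_setOf_eq, mem_Ioc, mem_Ioo]
    constructor
    · rintro ⟨⟨h1, h2⟩, hu⟩
      refine ⟨⟨?_, (qf_le_iff μ hu.1 hu.2).1 h1⟩, hu⟩
      by_contra h
      exact absurd ((qf_le_iff ν hu.1 hu.2).2 (not_lt.1 h)) (not_le.2 h2)
    · rintro ⟨⟨h1, h2⟩, hu⟩
      refine ⟨⟨(qf_le_iff μ hu.1 hu.2).2 h2, ?_⟩, hu⟩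
      by_contra h
      exact absurd ((qf_le_iff ν hu.1 hu.2).1 (not_lt.1 h)) (not_le.2 h1)
  rw [hset, volume_Ioc_inter (cdf_nonneg ν t) (cdf_le_one μ t)]

lemma qcoupling_apply' (t : ℝ) :
    qcoupling μ ν {p : ℝ × ℝ | p.2 ≤ t ∧ t < p.1} = ENNReal.ofReal (cdf ν t - cdf μ t) := by
  have hmB : MeasurableSet {p : ℝ × ℝ | p.2 ≤ t ∧ t < p.1} :=
    (measurableSet_le measurable_snd measurable_const).inter
      (measurableSet_lt measurable_const measurable_fst)
  rw [qcoupling, Measure.map_apply_of_aemeasurable (aemeasurable_qpair μ ν) hmB,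
    Measure.restrict_apply' measurableSet_Ioo]
  have hset : (fun u => (qf μ u, qf ν u)) ⁻¹' {p : ℝ × ℝ | p.2 ≤ t ∧ t < p.1} ∩ Ioo 0 1
      = Ioc (cdf μ t) (cdf ν t) ∩ Ioo 0 1 := by
    ext u
    simp only [mem_inter_iff, mem_preimage, mem_setOf_eq, mem_Ioc, mem_Ioo]
    constructor
    · rintro ⟨⟨h1, h2⟩, hu⟩
      refine ⟨⟨?_, (qf_le_iff ν hu.1 hu.2).1 h1⟩, hu⟩
      by_contra h
      exact absurd ((qf_le_iff μ hu.1 hu.2).2 (not_lt.1 h)) (not_le.2 h2)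
    · rintro ⟨⟨h1, h2⟩, hu⟩
      refine ⟨⟨(qf_le_iff ν hu.1 hu.2).2 h2, ?_⟩, hu⟩
      by_contra h
      exact absurd ((qf_le_iff μ hu.1 hu.2).1 (not_lt.1 h)) (not_le.2 h1)
  rw [hset, volume_Ioc_inter (cdf_nonneg μ t) (cdf_le_one ν t)]

lemma qcoupling_cost :
    ∫⁻ p, edist p.1 p.2 ∂(qcoupling μ ν) = ∫⁻ t, ENNReal.ofReal |cdf μ t - cdf ν t| := by
  rw [cost_eq]
  refine lintegral_congr fun t => ?_
  rw [qcoupling_apply, qcoupling_apply']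
  rcases le_total (cdf ν t) (cdf μ t) with h | h
  · rw [abs_of_nonneg (by linarith),
      ENNReal.ofReal_of_nonpos (show cdf ν t - cdf μ t ≤ 0 by linarith), add_zero]
  · rw [abs_of_nonpos (by linarith),
      ENNReal.ofReal_of_nonpos (show cdf μ t - cdf ν t ≤ 0 by linarith), zero_add, neg_sub]

lemma lintegral_abs_cdf_lt_top (hμ : Integrable id μ) (hν : Integrable id ν) :
    ∫⁻ t, ENNReal.ofReal |cdf μ t - cdf ν t| < ∞ := by
  rw [← qcoupling_cost μ ν]
  calc ∫⁻ p, edist p.1 p.2 ∂(qcoupling μ ν)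
      ≤ ∫⁻ p : ℝ × ℝ, ((‖p.1‖₊ : ℝ≥0∞) + ‖p.2‖₊) ∂(qcoupling μ ν) := by
        refine lintegral_mono fun p => ?_
        calc edist p.1 p.2 ≤ edist p.1 0 + edist 0 p.2 := edist_triangle _ _ _
          _ = (‖p.1‖₊ : ℝ≥0∞) + ‖p.2‖₊ := by
              rw [edist_zero_right, edist_comm, edist_zero_right, enorm_eq_nnnorm, enorm_eq_nnnorm]
    _ = ∫⁻ p : ℝ × ℝ, (‖p.1‖₊ : ℝ≥0∞) ∂(qcoupling μ ν)
        + ∫⁻ p : ℝ × ℝ, (‖p.2‖₊ : ℝ≥0∞) ∂(qcoupling μ ν) :=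
        lintegral_add_left measurable_fst.nnnorm.coe_nnreal_ennreal _
    _ < ∞ := by
        have h1 : ∫⁻ x, (‖x‖₊ : ℝ≥0∞) ∂μ = ∫⁻ p : ℝ × ℝ, (‖p.1‖₊ : ℝ≥0∞) ∂(qcoupling μ ν) := by
          conv_lhs => rw [← qcoupling_fst μ ν]
          exact lintegral_map (f := fun x : ℝ => (‖x‖₊ : ℝ≥0∞)) measurable_nnnorm.coe_nnreal_ennreal measurable_fst
        have h2 : ∫⁻ x, (‖x‖₊ : ℝ≥0∞) ∂ν = ∫⁻ p : ℝ × ℝ, (‖p.2‖₊ : ℝ≥0∞) ∂(qcoupling μ ν) := by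
          conv_lhs => rw [← qcoupling_snd μ ν]
          exact lintegral_map (f := fun x : ℝ => (‖x‖₊ : ℝ≥0∞)) measurable_nnnorm.coe_nnreal_ennreal measurable_snd
        rw [← h1, ← h2]
        exact ENNReal.add_lt_top.2 ⟨hμ.2, hν.2⟩

theorem W1_eq_integral_abs_cdf_sub'
    (hμ : Integrable id μ) (hν : Integrable id ν) :
    W1 μ ν = ENNReal.ofReal
      (∫ x, |(μ (Set.Iic x)).toReal - (ν (Set.Iic x)).toReal|) := by
  have hfeq : (fun x => |(μ (Set.Iic x)).toReal - (ν (Set.Iic x)).toReal|)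
      = fun t => |cdf μ t - cdf ν t| := by
    funext t; rw [cdf_eq_real, cdf_eq_real, measureReal_def, measureReal_def]
  have hL : W1 μ ν = ∫⁻ t, ENNReal.ofReal |cdf μ t - cdf ν t| := by
    apply le_antisymm
    · exact sInf_le ⟨qcoupling μ ν, inferInstance, qcoupling_fst μ ν, qcoupling_snd μ ν,
        (qcoupling_cost μ ν).symm⟩
    · refine le_sInf ?_
      rintro r ⟨π, hπ, h1, h2, rfl⟩
      haveI := hπ
      rw [cost_eq π]
      refine lintegral_mono fun t => ?_
      have h := coupling_lower μ π ν h1 h2 t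
      rwa [cdf_eq_real, cdf_eq_real, measureReal_def, measureReal_def]
  have hint : Integrable (fun t => |cdf μ t - cdf ν t|) := by
    refine ⟨((((cdf μ).mono.measurable).sub ((cdf ν).mono.measurable)).abs).aestronglyMeasurable, ?_⟩
    rw [hasFiniteIntegral_iff_ofReal (ae_of_all _ fun t => abs_nonneg _)]
    exact lintegral_abs_cdf_lt_top μ ν hμ hν
  rw [hfeq, hL, ← ofReal_integral_eq_lintegral_ofReal hint (ae_of_all _ fun t => abs_nonneg _)]

end Aux

/-- For probability measures on `ℝ` with finite first moments, the 1-Wasserstein distance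
equals the `L¹` distance between the cumulative distribution functions. -/
theorem W1_eq_integral_abs_cdf_sub
    (μ ν : Measure ℝ) [IsProbabilityMeasure μ] [IsProbabilityMeasure ν]
    (hμ : Integrable id μ) (hν : Integrable id ν) :
    W1 μ ν = ENNReal.ofReal
      (∫ x, |(μ (Set.Iic x)).toReal - (ν (Set.Iic x)).toReal|) := by
  exact W1_eq_integral_abs_cdf_sub' μ ν hμ hν
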